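/- Ball safeness: let u* ∈ Δ be the maximizer of D over Δ. Then for every u ∈ Δ, u* belongs to the closed Euclidean ball of center c = (1/2)(y + u) and radius r = (1/2)‖y − u‖₂, i.e., ‖u* − (1/2)(y + u)‖₂ ≤ (1/2)‖y − u‖₂. -/
import Mathlib


/-- Euclidean norm of a vector in ℝ^m. -/
noncomputable def norm2 {m : ℕ} (v : Fin m → ℝ) : ℝ := Real.sqrt (∑ i, v i ^ 2)

/-- ℓ1 norm of a vector in ℝ^n. -/
def norm1 {n : ℕ} (x : Fin n → ℝ) : ℝ := ∑ i, |x i|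

/-- Canonical inner product on ℝ^m. -/
def dot {m : ℕ} (a u : Fin m → ℝ) : ℝ := ∑ i, a i * u i

/-- Lasso primal objective P(x) = (1/2)‖y − Ax‖₂² + λ‖x‖₁. -/
noncomputable def Pobj {m n : ℕ} (A : Matrix (Fin m) (Fin n) ℝ) (y : Fin m → ℝ)
    (lam : ℝ) (x : Fin n → ℝ) : ℝ :=
  (1 / 2) * norm2 (y - A.mulVec x) ^ 2 + lam * norm1 x

/-- Lasso dual objective D(u) = (1/2)‖y‖₂² − (1/2)‖y − u‖₂². -/
noncomputable def Dobj {m : ℕ} (y u : Fin m → ℝ) : ℝ :=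
  (1 / 2) * norm2 y ^ 2 - (1 / 2) * norm2 (y - u) ^ 2

/-- Dual feasibility: u ∈ Δ iff |⟨a_i, u⟩| ≤ λ for every column a_i of A. -/
def feas {m n : ℕ} (A : Matrix (Fin m) (Fin n) ℝ) (lam : ℝ) (u : Fin m → ℝ) : Prop :=
  ∀ i : Fin n, |dot (fun j => A j i) u| ≤ lam
lemma norm2_sq {m : ℕ} (v : Fin m → ℝ) : norm2 v ^ 2 = ∑ i, v i ^ 2 := by
  unfold norm2
  exact Real.sq_sqrt (Finset.sum_nonneg fun i _ => sq_nonneg _)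

/-- ball safeness: the dual maximizer u* belongs to the ball of center
c = (1/2)(y + u) and radius r = (1/2)‖y − u‖₂ for every dual feasible u. -/
theorem lasso_ball_safe (m n : ℕ) (hm : 0 < m) (hn : 0 < n)
    (A : Matrix (Fin m) (Fin n) ℝ) (y : Fin m → ℝ) (lam : ℝ) (hlam : 0 < lam)
    (ustar : Fin m → ℝ) (hfeas : feas A lam ustar)
    (hmax : ∀ u : Fin m → ℝ, feas A lam u → Dobj y u ≤ Dobj y ustar) :
    ∀ u : Fin m → ℝ, feas A lam u →
      norm2 (ustar - (fun i => (y i + u i) / 2)) ≤ (1 / 2) * norm2 (y - u) := by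
  intro u hu
  set S1 : ℝ := ∑ i, (y i - ustar i) * (u i - ustar i) with hS1
  set K : ℝ := ∑ i, (u i - ustar i) ^ 2 with hK
  have hKnn : 0 ≤ K := Finset.sum_nonneg fun i _ => sq_nonneg _
  -- variational inequality: for each t ∈ [0,1], 2*t*S1 ≤ t^2*K
  have key : ∀ t : ℝ, 0 ≤ t → t ≤ 1 → 2 * t * S1 ≤ t ^ 2 * K := by
    intro t ht0 ht1
    have hfeast : feas A lam (fun j => ustar j + t * (u j - ustar j)) := by
      intro i
      have hdot : dot (fun j => A j i) (fun j => ustar j + t * (u j - ustar j))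
          = (1 - t) * dot (fun j => A j i) ustar + t * dot (fun j => A j i) u := by
        unfold dot
        rw [Finset.mul_sum, Finset.mul_sum, ← Finset.sum_add_distrib]
        exact Finset.sum_congr rfl fun j _ => by ring
      rw [hdot]
      calc |(1 - t) * dot (fun j => A j i) ustar + t * dot (fun j => A j i) u|
          ≤ |(1 - t) * dot (fun j => A j i) ustar| + |t * dot (fun j => A j i) u| :=
            abs_add_le _ _
        _ = (1 - t) * |dot (fun j => A j i) ustar| + t * |dot (fun j => A j i) u| := by
            rw [abs_mul, abs_mul, abs_of_nonneg (by linarith), abs_of_nonneg ht0]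
        _ ≤ (1 - t) * lam + t * lam :=
            add_le_add (mul_le_mul_of_nonneg_left (hfeas i) (by linarith))
              (mul_le_mul_of_nonneg_left (hu i) ht0)
        _ = lam := by ring
    have hD := hmax _ hfeast
    unfold Dobj at hD
    have h1 : norm2 (y - ustar) ^ 2 ≤ norm2 (y - fun j => ustar j + t * (u j - ustar j)) ^ 2 := by
      linarith
    rw [norm2_sq, norm2_sq] at h1
    have h2 : ∑ i, ((y - fun j => ustar j + t * (u j - ustar j)) i) ^ 2
        = (∑ i, ((y - ustar) i) ^ 2) - 2 * t * S1 + t ^ 2 * K := by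
      rw [hS1, hK, Finset.mul_sum, Finset.mul_sum, ← Finset.sum_sub_distrib,
        ← Finset.sum_add_distrib]
      exact Finset.sum_congr rfl fun i _ => by simp [Pi.sub_apply]; ring
    rw [h2] at h1
    linarith
  have hS1le : S1 ≤ 0 := by
    by_contra hpos
    push_neg at hpos
    rcases le_or_gt K 0 with hK0 | hKpos
    · have := key 1 zero_le_one le_rfl
      nlinarith
    · set t : ℝ := min 1 (S1 / K) with hT
      have ht0 : 0 < t := lt_min one_pos (div_pos hpos hKpos)
      have ht1 : t ≤ 1 := min_le_left _ _
      have htk : t ≤ S1 / K := min_le_right _ _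
      have := key t ht0.le ht1
      have htK : t * K ≤ S1 := (le_div_iff₀ hKpos).mp htk
      have h5 : t ^ 2 * K ≤ t * S1 := by
        have := mul_le_mul_of_nonneg_left htK ht0.le
        nlinarith
      have h6 : 0 < t * S1 := mul_pos ht0 hpos
      linarith
  -- conclude
  have hsum : ∑ i, ((ustar - fun i => (y i + u i) / 2) i) ^ 2
      ≤ (1 / 4) * ∑ i, ((y - u) i) ^ 2 := by
    have : (1 / 4) * (∑ i, ((y - u) i) ^ 2) - ∑ i, ((ustar - fun i => (y i + u i) / 2) i) ^ 2
        = -S1 := by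
      rw [hS1, Finset.mul_sum, ← Finset.sum_sub_distrib, ← Finset.sum_neg_distrib]
      exact Finset.sum_congr rfl fun i _ => by simp [Pi.sub_apply]; ring
    linarith
  unfold norm2
  have h4 : (1 : ℝ) / 2 * Real.sqrt (∑ i, ((y - u) i) ^ 2)
      = Real.sqrt ((1 / 4) * ∑ i, ((y - u) i) ^ 2) := by
    rw [Real.sqrt_mul (by norm_num), show ((1:ℝ)/4) = (1/2)^2 by norm_num,
      Real.sqrt_sq (by norm_num)]
  rw [h4]
  exact Real.sqrt_le_sqrt hsum
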